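/- arXiv:2001.02340 — 2 statements merged into one kernel-verified Lean document; each statement's English description precedes it below -/
import Mathlib

section
/- Let Ω ⊆ ℝ² be measurable, r > 0, p ≥ 1, and x₁, x₂ ∈ ℝ². Then the L^p(Ω)-norm of the difference of the indicator functions of B_r(x₁) ∩ Ω and B_r(x₂) ∩ Ω is at most (4 r |x₁ − x₂|)^{1/p}. -/
open MeasureTheory

noncomputable def rotLE (a b : ℝ) (hab : a^2 + b^2 = 1) :
    EuclideanSpace ℝ (Fin 2) ≃ₗ[ℝ] EuclideanSpace ℝ (Fin 2) :=
  LinearEquiv.ofInvolutive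
    { toFun := fun x => WithLp.toLp 2 ![-b * x 0 + a * x 1, a * x 0 + b * x 1]
      map_add' := by intro x y; ext i; fin_cases i <;>
        simp [PiLp.add_apply] <;> ring
      map_smul' := by intro c x; ext i; fin_cases i <;>
        simp [PiLp.smul_apply, smul_eq_mul] <;> ring }
    (by
      intro x
      ext i
      fin_cases i <;> simp
      · linear_combination (x 0) * hab
      · linear_combination (x 1) * hab)

theorem rotLE_apply (a b : ℝ) (hab : a^2+b^2=1) (x : EuclideanSpace ℝ (Fin 2)) :
    rotLE a b hab x = ![-b * x 0 + a * x 1, a * x 0 + b * x 1] := rfl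

theorem norm_eq2 (y : EuclideanSpace ℝ (Fin 2)) : ‖y‖ = Real.sqrt (y 0 ^ 2 + y 1 ^ 2) := by
  rw [EuclideanSpace.norm_eq]
  congr 1
  rw [Fin.sum_univ_two]
  simp [Real.norm_eq_abs, sq_abs]

theorem dist_sq2 (x y : EuclideanSpace ℝ (Fin 2)) :
    dist x y ^ 2 = (x 0 - y 0)^2 + (x 1 - y 1)^2 := by
  rw [EuclideanSpace.dist_eq, Real.sq_sqrt (by positivity), Fin.sum_univ_two]
  simp [Real.dist_eq, sq_abs]

noncomputable def rotLIE (a b : ℝ) (hab : a^2 + b^2 = 1) :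
    EuclideanSpace ℝ (Fin 2) ≃ₗᵢ[ℝ] EuclideanSpace ℝ (Fin 2) :=
  { toLinearEquiv := rotLE a b hab
    norm_map' := by
      intro x
      rw [norm_eq2, norm_eq2, rotLE_apply]
      congr 1
      show (-b * x 0 + a * x 1)^2 + (a * x 0 + b * x 1)^2 = _
      linear_combination (x 0 ^ 2 + x 1 ^ 2) * hab }

theorem rotLIE_apply (a b : ℝ) (hab : a^2+b^2=1) (x : EuclideanSpace ℝ (Fin 2)) :
    rotLIE a b hab x = ![-b * x 0 + a * x 1, a * x 0 + b * x 1] := rfl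


theorem lune_arith (r d u w : ℝ) (hr : 0 < r) (hd0 : 0 < d)
    (hq1 : (u - d/2)^2 + w^2 < r^2) (hq2 : r^2 ≤ (u + d/2)^2 + w^2) :
    (-r < w ∧ w < r) ∧
      Real.sqrt (r^2 - w^2) - d/2 ≤ u ∧ u < Real.sqrt (r^2 - w^2) + d/2 := by
  have hw2 : w^2 < r^2 := by nlinarith [sq_nonneg (u - d/2)]
  have hrw : (0:ℝ) ≤ r^2 - w^2 := by linarith
  have hg : Real.sqrt (r^2 - w^2) ^ 2 = r^2 - w^2 := Real.sq_sqrt hrw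
  have hg0 : 0 ≤ Real.sqrt (r^2 - w^2) := Real.sqrt_nonneg _
  have hupos : 0 < u := by nlinarith
  refine ⟨⟨by nlinarith, by nlinarith⟩, by nlinarith, by nlinarith⟩

theorem lune (r : ℝ) (hr : 0 < r) (x₁ x₂ : EuclideanSpace ℝ (Fin 2)) :
    volume (Metric.ball x₁ r \ Metric.ball x₂ r)
      ≤ ENNReal.ofReal (2 * r * dist x₁ x₂) := by
  rcases eq_or_ne x₁ x₂ with h | h
  · simp [h]
  have hd0 : 0 < dist x₁ x₂ := dist_pos.2 h
  set d := dist x₁ x₂ with hd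
  set a := (x₁ 0 - x₂ 0) / d with ha
  set b := (x₁ 1 - x₂ 1) / d with hb
  have hd2 : d ^ 2 = (x₁ 0 - x₂ 0)^2 + (x₁ 1 - x₂ 1)^2 := dist_sq2 x₁ x₂
  have hab : a^2 + b^2 = 1 := by
    rw [ha, hb]
    field_simp
    linarith [hd2]
  have had : a * d = x₁ 0 - x₂ 0 := by rw [ha]; field_simp
  have hbd : b * d = x₁ 1 - x₂ 1 := by rw [hb]; field_simp
  set m : EuclideanSpace ℝ (Fin 2) := (2⁻¹ : ℝ) • (x₁ + x₂) with hm
  set L := rotLIE a b hab with hL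
  set Ψ : EuclideanSpace ℝ (Fin 2) → ℝ × ℝ :=
    fun x => (MeasurableEquiv.finTwoArrow : (Fin 2 → ℝ) ≃ᵐ ℝ × ℝ)
      ((MeasurableEquiv.toLp 2 (Fin 2 → ℝ)).symm (L (x - m))) with hΨ
  have hΨmp : MeasurePreserving Ψ volume volume :=
    ((volume_preserving_finTwoArrow ℝ).comp
      (EuclideanSpace.volume_preserving_symm_measurableEquiv_toLp (Fin 2))).comp
      (L.measurePreserving.comp (measurePreserving_sub_right volume m))
  set S : Set (ℝ × ℝ) := {q | q.1 ∈ Set.Ioo (-r) r ∧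
      q.2 ∈ Set.Ico (Real.sqrt (r^2 - q.1^2) - d/2) (Real.sqrt (r^2 - q.1^2) + d/2)} with hS
  have hSm : MeasurableSet S := by
    have h1 : Measurable fun q : ℝ × ℝ => Real.sqrt (r^2 - q.1^2) :=
      (Real.continuous_sqrt.comp (by continuity)).measurable
    have : S = (Prod.fst ⁻¹' Set.Ioo (-r) r) ∩
        ({q : ℝ × ℝ | Real.sqrt (r^2 - q.1^2) - d/2 ≤ q.2} ∩
         {q : ℝ × ℝ | q.2 < Real.sqrt (r^2 - q.1^2) + d/2}) := by
      ext q
      simp only [hS, Set.mem_setOf_eq, Set.mem_inter_iff, Set.mem_preimage, Set.mem_Ico]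
    rw [this]
    exact (measurable_fst measurableSet_Ioo).inter
      ((measurableSet_le (h1.sub measurable_const) measurable_snd).inter
        (measurableSet_lt measurable_snd (h1.add measurable_const)))
  have hslice : ∀ w : ℝ, (volume : Measure ℝ) (Prod.mk w ⁻¹' S)
      = (Set.Ioo (-r) r).indicator (fun _ => ENNReal.ofReal d) w := by
    intro w
    by_cases hw : w ∈ Set.Ioo (-r) r
    · have hpre : Prod.mk w ⁻¹' S
          = Set.Ico (Real.sqrt (r^2 - w^2) - d/2) (Real.sqrt (r^2 - w^2) + d/2) := by
        ext u
        simp only [hS, Set.mem_preimage, Set.mem_setOf_eq, Set.mem_Ico]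
        exact ⟨fun hq => hq.2, fun hq => ⟨hw, hq⟩⟩
      rw [hpre, Real.volume_Ico, Set.indicator_of_mem hw]
      congr 1
      ring
    · have hpre : Prod.mk w ⁻¹' S = ∅ := by
        apply Set.eq_empty_iff_forall_notMem.2
        intro u hq
        exact hw hq.1
      rw [hpre, Set.indicator_of_notMem hw]
      simp
  have hvolS : volume S = ENNReal.ofReal (2 * r * d) := by
    rw [Measure.volume_eq_prod, Measure.prod_apply hSm]
    simp_rw [hslice]
    rw [lintegral_indicator measurableSet_Ioo _, setLIntegral_const, Real.volume_Ioo,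
      ← ENNReal.ofReal_mul hd0.le]
    congr 1
    ring
  have hsub : Metric.ball x₁ r \ Metric.ball x₂ r ⊆ Ψ ⁻¹' S := by
    rintro x ⟨hx1, hx2⟩
    rw [Metric.mem_ball] at hx1
    have hx2' : r ≤ dist x x₂ := not_lt.1 fun hc => hx2 (Metric.mem_ball.2 hc)
    have hq1 : dist x x₁ ^ 2 < r ^ 2 := by nlinarith [dist_nonneg (x := x) (y := x₁)]
    have hq2 : r ^ 2 ≤ dist x x₂ ^ 2 := by nlinarith [dist_nonneg (x := x) (y := x₂)]
    set y0 : ℝ := x 0 - (x₁ 0 + x₂ 0)/2 with hy0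
    set y1 : ℝ := x 1 - (x₁ 1 + x₂ 1)/2 with hy1
    set u : ℝ := a * y0 + b * y1 with hu
    set w : ℝ := -b * y0 + a * y1 with hw
    have hxm0 : (x - m) 0 = y0 := by
      simp [hm, hy0, PiLp.sub_apply, PiLp.smul_apply, PiLp.add_apply]
      ring
    have hxm1 : (x - m) 1 = y1 := by
      simp [hm, hy1, PiLp.sub_apply, PiLp.smul_apply, PiLp.add_apply]
      ring
    have hΨx : Ψ x = (w, u) := by
      show ((L (x - m)) 0, (L (x - m)) 1) = (w, u)
      rw [hL, rotLIE_apply, hxm0, hxm1]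
      simp [hu, hw]
    have key1 : (u - d/2)^2 + w^2 = dist x x₁ ^ 2 := by
      rw [dist_sq2]
      have e0 : x 0 - x₁ 0 = y0 - a*d/2 := by rw [had]; rw [hy0]; ring
      have e1 : x 1 - x₁ 1 = y1 - b*d/2 := by rw [hbd]; rw [hy1]; ring
      rw [e0, e1, hu, hw]
      linear_combination (y0^2 + y1^2 - d^2/4) * hab
    have key2 : (u + d/2)^2 + w^2 = dist x x₂ ^ 2 := by
      rw [dist_sq2]
      have e0 : x 0 - x₂ 0 = y0 + a*d/2 := by rw [hy0]; linear_combination (-1/2) * had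
      have e1 : x 1 - x₂ 1 = y1 + b*d/2 := by rw [hy1]; linear_combination (-1/2) * hbd
      rw [e0, e1, hu, hw]
      linear_combination (y0^2 + y1^2 - d^2/4) * hab
    clear_value y0 y1 u w
    have hq1' : (u - d/2)^2 + w^2 < r^2 := by rw [key1]; exact hq1
    have hq2' : r^2 ≤ (u + d/2)^2 + w^2 := by rw [key2]; exact hq2
    obtain ⟨⟨hwa, hwb⟩, hua, hub⟩ := lune_arith r d u w hr hd0 hq1' hq2'
    have hmem : (w, u) ∈ S := ⟨⟨hwa, hwb⟩, hua, hub⟩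
    exact Set.mem_preimage.2 (hΨx ▸ hmem)
  calc volume (Metric.ball x₁ r \ Metric.ball x₂ r) ≤ volume (Ψ ⁻¹' S) := measure_mono hsub
    _ = volume S := hΨmp.measure_preimage hSm.nullMeasurableSet
    _ = ENNReal.ofReal (2 * r * d) := hvolS

theorem stmt_2 (Ω : Set (EuclideanSpace ℝ (Fin 2))) (hΩ : MeasurableSet Ω)
    (r : ℝ) (hr : 0 < r) (p : ℝ) (hp : 1 ≤ p) (x₁ x₂ : EuclideanSpace ℝ (Fin 2)) :
    eLpNorm
      (fun x => (Metric.ball x₁ r ∩ Ω).indicator (fun _ => (1 : ℝ)) x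
        - (Metric.ball x₂ r ∩ Ω).indicator (fun _ => (1 : ℝ)) x)
      (ENNReal.ofReal p) (volume.restrict Ω)
      ≤ ENNReal.ofReal ((4 * r * dist x₁ x₂) ^ (1 / p)) := by
  set A := (Metric.ball x₁ r \ Metric.ball x₂ r) ∪ (Metric.ball x₂ r \ Metric.ball x₁ r) with hA
  have hAm : MeasurableSet A :=
    (measurableSet_ball.diff measurableSet_ball).union
      (measurableSet_ball.diff measurableSet_ball)
  have hbound : ∀ x, ‖(Metric.ball x₁ r ∩ Ω).indicator (fun _ => (1:ℝ)) x
      - (Metric.ball x₂ r ∩ Ω).indicator (fun _ => (1:ℝ)) x‖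
      ≤ ‖A.indicator (fun _ => (1:ℝ)) x‖ := by
    intro x
    by_cases h1 : x ∈ Metric.ball x₁ r ∩ Ω <;> by_cases h2 : x ∈ Metric.ball x₂ r ∩ Ω
    · simp [Set.indicator_of_mem, h1, h2]
    · have hmem : x ∈ A := Or.inl ⟨h1.1, fun hb => h2 ⟨hb, h1.2⟩⟩
      simp [Set.indicator_of_mem, Set.indicator_of_notMem, h1, h2, hmem]
    · have hmem : x ∈ A := Or.inr ⟨h2.1, fun hb => h1 ⟨hb, h2.2⟩⟩
      simp [Set.indicator_of_mem, Set.indicator_of_notMem, h1, h2, hmem]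
    · simp [Set.indicator_of_notMem, h1, h2]
  have hp0 : (ENNReal.ofReal p) ≠ 0 := by
    simp only [ne_eq, ENNReal.ofReal_eq_zero, not_le]
    linarith
  have hpt : (ENNReal.ofReal p) ≠ ⊤ := ENNReal.ofReal_ne_top
  have hmuA : (volume.restrict Ω) A ≤ ENNReal.ofReal (4 * r * dist x₁ x₂) := by
    calc (volume.restrict Ω) A ≤ volume A := Measure.restrict_le_self A
      _ ≤ volume (Metric.ball x₁ r \ Metric.ball x₂ r)
          + volume (Metric.ball x₂ r \ Metric.ball x₁ r) := measure_union_le _ _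
      _ ≤ ENNReal.ofReal (2 * r * dist x₁ x₂) + ENNReal.ofReal (2 * r * dist x₂ x₁) := by
          gcongr
          · exact lune r hr x₁ x₂
          · exact lune r hr x₂ x₁
      _ = ENNReal.ofReal (4 * r * dist x₁ x₂) := by
          rw [dist_comm x₂ x₁, ← ENNReal.ofReal_add (by positivity) (by positivity)]
          congr 1
          ring
  have h1p : (0:ℝ) ≤ 1 / p := by positivity
  refine le_trans (eLpNorm_mono hbound) ?_
  rw [eLpNorm_indicator_const hAm hp0 hpt, ENNReal.toReal_ofReal (by linarith : (0:ℝ) ≤ p),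
    enorm_one, one_mul]
  calc (volume.restrict Ω) A ^ (1 / p)
      ≤ (ENNReal.ofReal (4 * r * dist x₁ x₂)) ^ (1 / p) := ENNReal.rpow_le_rpow hmuA h1p
    _ = ENNReal.ofReal ((4 * r * dist x₁ x₂) ^ (1 / p)) :=
        ENNReal.ofReal_rpow_of_nonneg (by positivity) h1p
end

section
/- Let Ω ⊆ ℝ² be measurable, r_c > 0, F₀ > 0, and define g(t,x) = F₀·𝟙_{B_{r_c}(0)}(x − z(t)) for x ∈ Ω, where z : [0,T] → ℝ² is Hölder continuous with exponent 1/2 and Hölder seminorm at most M. Then for any p ≥ 1, the map t ↦ g(t,·) from [0,T] to L^p(Ω) is Hölder continuous with exponent 1/(2p), with Hölder constant F₀ (4 r_c M)^{1/p}. -/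
open MeasureTheory


-- slicing lemma in ℝ × ℝ
lemma lune_prod (r d : ℝ) (hr : 0 < r) (hd : 0 ≤ d) :
    volume ({p : ℝ × ℝ | p.1^2 + p.2^2 < r^2} \ {p : ℝ × ℝ | p.1^2 + (p.2 - d)^2 < r^2})
      ≤ ENNReal.ofReal (2 * r * d) := by
  have hA : MeasurableSet {p : ℝ × ℝ | p.1^2 + p.2^2 < r^2} :=
    measurableSet_lt (by fun_prop) measurable_const
  have hB : MeasurableSet {p : ℝ × ℝ | p.1^2 + (p.2 - d)^2 < r^2} :=
    measurableSet_lt (by fun_prop) measurable_const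
  rw [Measure.volume_eq_prod, Measure.prod_apply (hA.diff hB)]
  have hbd : ∀ x : ℝ, volume (Prod.mk x ⁻¹' ({p : ℝ × ℝ | p.1^2 + p.2^2 < r^2} \
      {p : ℝ × ℝ | p.1^2 + (p.2 - d)^2 < r^2}))
      ≤ (Set.Ioo (-r) r).indicator (fun _ => ENNReal.ofReal d) x := by
    intro x
    by_cases hx : x ∈ Set.Ioo (-r) r
    · set s : ℝ := Real.sqrt (r^2 - x^2) with hs
      have hx2 : x^2 < r^2 := by
        rcases hx with ⟨h1, h2⟩
        nlinarith
      have hs0 : 0 ≤ s := Real.sqrt_nonneg _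
      have hs2 : s^2 = r^2 - x^2 := Real.sq_sqrt (by linarith)
      have hsub : Prod.mk x ⁻¹' ({p : ℝ × ℝ | p.1^2 + p.2^2 < r^2} \
          {p : ℝ × ℝ | p.1^2 + (p.2 - d)^2 < r^2}) ⊆ Set.Ioc (-s) (d - s) := by
        rintro y ⟨h1, h2⟩
        simp only [Set.mem_setOf_eq] at h1 h2
        push_neg at h2
        have hy2 : y^2 < s^2 := by nlinarith
        have hyd : s^2 ≤ (y - d)^2 := by nlinarith
        have hys : -s < y ∧ y < s := abs_lt.mp (by
          have := Real.sqrt_lt_sqrt (sq_nonneg y) hy2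
          rwa [Real.sqrt_sq_eq_abs, Real.sqrt_sq hs0] at this)
        constructor
        · exact hys.1
        · -- y ≤ d - s
          have habs : s ≤ |y - d| := by
            have := Real.sqrt_le_sqrt hyd
            rwa [Real.sqrt_sq hs0, Real.sqrt_sq_eq_abs] at this
          rcases le_abs.mp habs with h | h
          · linarith [hys.2]
          · linarith
      calc volume _ ≤ volume (Set.Ioc (-s) (d - s)) := measure_mono hsub
        _ ≤ ENNReal.ofReal d := by
            rw [Real.volume_Ioc]
            exact ENNReal.ofReal_le_ofReal (by linarith)
        _ = _ := by simp [Set.indicator_of_mem hx]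
    · have : Prod.mk x ⁻¹' ({p : ℝ × ℝ | p.1^2 + p.2^2 < r^2} \
          {p : ℝ × ℝ | p.1^2 + (p.2 - d)^2 < r^2}) = ∅ := by
        ext y
        simp only [Set.mem_preimage, Set.mem_diff, Set.mem_setOf_eq, Set.mem_empty_iff_false,
          iff_false, not_and]
        intro h1
        exfalso
        apply hx
        simp only [Set.mem_Ioo]
        constructor <;> nlinarith
      simp [this]
  calc ∫⁻ x, volume (Prod.mk x ⁻¹' _) ≤ ∫⁻ x, (Set.Ioo (-r) r).indicator
        (fun _ => ENNReal.ofReal d) x := lintegral_mono hbd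
    _ = ENNReal.ofReal d * volume (Set.Ioo (-r) r) := by
        rw [lintegral_indicator measurableSet_Ioo, setLIntegral_const]
    _ = ENNReal.ofReal (2 * r * d) := by
        rw [Real.volume_Ioo, ← ENNReal.ofReal_mul hd]
        ring_nf

noncomputable def eE : EuclideanSpace ℝ (Fin 2) ≃ᵐ ℝ × ℝ :=
  (MeasurableEquiv.toLp 2 (Fin 2 → ℝ)).symm.trans MeasurableEquiv.finTwoArrow

lemma eE_mp : MeasurePreserving eE volume volume :=
  (volume_preserving_finTwoArrow ℝ).comp (EuclideanSpace.volume_preserving_symm_measurableEquiv_toLp (Fin 2))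

lemma eball_preimage (c : EuclideanSpace ℝ (Fin 2)) (r : ℝ) (hr : 0 < r) :
    Metric.ball c r = eE ⁻¹' {p : ℝ × ℝ | (p.1 - c 0)^2 + (p.2 - c 1)^2 < r^2} := by
  ext x
  have he : eE x = (x 0, x 1) := rfl
  simp [Metric.mem_ball, EuclideanSpace.dist_eq, Fin.sum_univ_two, he, Real.sqrt_lt' hr,
    Real.dist_eq, sq_abs]

lemma lune_ball (a b : EuclideanSpace ℝ (Fin 2)) (r : ℝ) (hr : 0 < r) :
    volume (Metric.ball a r \ Metric.ball b r) ≤ ENNReal.ofReal (2 * r * dist a b) := by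
  set d := dist a b with hdd
  have hd : 0 ≤ d := dist_nonneg
  -- step 1: translate
  have step1 : volume (Metric.ball a r \ Metric.ball b r)
      = volume (Metric.ball 0 r \ Metric.ball (b - a) r) := by
    have h : Metric.ball a r \ Metric.ball b r
        = (· - a) ⁻¹' (Metric.ball (0 : EuclideanSpace ℝ (Fin 2)) r \ Metric.ball (b - a) r) := by
      ext x
      simp [Metric.mem_ball, dist_eq_norm, sub_sub_sub_cancel_right]
    rw [h]
    exact (measurePreserving_sub_right volume a).measure_preimage
      ((measurableSet_ball.diff measurableSet_ball).nullMeasurableSet)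
  -- step 2: rotate b - a to (0, d)
  set v : EuclideanSpace ℝ (Fin 2) := b - a with hv
  set w : EuclideanSpace ℝ (Fin 2) := (EuclideanSpace.equiv (Fin 2) ℝ).symm ![0, d] with hw
  have hw0 : w 0 = 0 := rfl
  have hw1 : w 1 = d := rfl
  have hnw : ‖w‖ = d := by
    rw [EuclideanSpace.norm_eq]
    simp [Fin.sum_univ_two, hw0, hw1, Real.sqrt_sq hd]
  have hnv : ‖v‖ = d := by rw [hv, hdd, dist_eq_norm, norm_sub_rev]
  have step2 : volume (Metric.ball (0:EuclideanSpace ℝ (Fin 2)) r \ Metric.ball v r)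
      = volume (Metric.ball (0:EuclideanSpace ℝ (Fin 2)) r \ Metric.ball w r) := by
    set f := Submodule.reflection (ℝ ∙ (v - w))ᗮ with hf
    have hfv : f v = w := Submodule.reflection_sub (hnv.trans hnw.symm)
    have hpre : Metric.ball (0:EuclideanSpace ℝ (Fin 2)) r \ Metric.ball v r
        = f ⁻¹' (Metric.ball 0 r \ Metric.ball w r) := by
      ext x
      simp only [Set.mem_preimage, Set.mem_diff, Metric.mem_ball]
      rw [← hfv, ← f.dist_map x v]
      have h0 : dist (f x) 0 = dist x 0 := by nth_rewrite 1 [← map_zero f]; rw [f.dist_map]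
      rw [h0]
    rw [hpre]
    exact f.measurePreserving.measure_preimage
      ((measurableSet_ball.diff measurableSet_ball).nullMeasurableSet)
  -- step 3: transfer to ℝ × ℝ
  have h0 : Metric.ball (0:EuclideanSpace ℝ (Fin 2)) r
      = eE ⁻¹' {p : ℝ × ℝ | p.1^2 + p.2^2 < r^2} := by
    have := eball_preimage 0 r hr
    simpa using this
  have h1 : Metric.ball w r = eE ⁻¹' {p : ℝ × ℝ | p.1^2 + (p.2 - d)^2 < r^2} := by
    have := eball_preimage w r hr
    rw [hw0, hw1] at this
    simpa using this
  have hA : MeasurableSet {p : ℝ × ℝ | p.1^2 + p.2^2 < r^2} :=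
    measurableSet_lt (by fun_prop) measurable_const
  have hB : MeasurableSet {p : ℝ × ℝ | p.1^2 + (p.2 - d)^2 < r^2} :=
    measurableSet_lt (by fun_prop) measurable_const
  have step3 : volume (Metric.ball (0:EuclideanSpace ℝ (Fin 2)) r \ Metric.ball w r)
      = volume ({p : ℝ × ℝ | p.1^2 + p.2^2 < r^2} \ {p : ℝ × ℝ | p.1^2 + (p.2 - d)^2 < r^2}) := by
    rw [h0, h1, ← Set.preimage_diff]
    exact eE_mp.measure_preimage ((hA.diff hB).nullMeasurableSet)
  rw [step1, step2, step3]
  exact lune_prod r d hr hd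

theorem stmt_3 (Ω : Set (EuclideanSpace ℝ (Fin 2))) (hΩ : MeasurableSet Ω)
    (rc F₀ T M : ℝ) (hrc : 0 < rc) (hF₀ : 0 < F₀) (hT : 0 < T) (hM : 0 ≤ M)
    (z : ℝ → EuclideanSpace ℝ (Fin 2))
    (hz : ∀ t₁ ∈ Set.Icc (0 : ℝ) T, ∀ t₂ ∈ Set.Icc (0 : ℝ) T,
      dist (z t₁) (z t₂) ≤ M * |t₁ - t₂| ^ ((1 : ℝ) / 2))
    (g : ℝ → EuclideanSpace ℝ (Fin 2) → ℝ)
    (hg : ∀ t x, g t x = F₀ * (Metric.ball (0 : EuclideanSpace ℝ (Fin 2)) rc).indicator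
      (fun _ => (1 : ℝ)) (x - z t))
    (p : ℝ) (hp : 1 ≤ p) :
    ∀ t₁ ∈ Set.Icc (0 : ℝ) T, ∀ t₂ ∈ Set.Icc (0 : ℝ) T,
      eLpNorm (fun x => g t₁ x - g t₂ x) (ENNReal.ofReal p) (volume.restrict Ω)
        ≤ ENNReal.ofReal (F₀ * (4 * rc * M) ^ (1 / p) * |t₁ - t₂| ^ (1 / (2 * p))) := by
  intro t₁ ht₁ t₂ ht₂
  have hp0 : (0:ℝ) < p := lt_of_lt_of_le one_pos hp
  set A := Metric.ball (z t₁) rc with hA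
  set B := Metric.ball (z t₂) rc with hB
  set S := (A \ B) ∪ (B \ A) with hSdef
  have hS : MeasurableSet S :=
    (measurableSet_ball.diff measurableSet_ball).union
      (measurableSet_ball.diff measurableSet_ball)
  have hmem : ∀ t x, (x - z t ∈ Metric.ball (0:EuclideanSpace ℝ (Fin 2)) rc)
      ↔ x ∈ Metric.ball (z t) rc := by
    intro t x; rw [mem_ball_zero_iff, Metric.mem_ball, dist_eq_norm]
  have hptw : ∀ x, ‖g t₁ x - g t₂ x‖ ≤ ‖S.indicator (fun _ => F₀) x‖ := by
    intro x
    rw [hg, hg]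
    by_cases hxA : x ∈ A <;> by_cases hxB : x ∈ B <;>
      simp [Set.indicator_apply, hmem t₁ x, hmem t₂ x, hxA, hxB, hSdef, ← hA, ← hB,
        abs_of_pos hF₀, le_abs_self]
  have h1 : eLpNorm (fun x => g t₁ x - g t₂ x) (ENNReal.ofReal p) (volume.restrict Ω)
      ≤ eLpNorm (S.indicator fun _ => F₀) (ENNReal.ofReal p) (volume.restrict Ω) :=
    eLpNorm_mono hptw
  rw [eLpNorm_indicator_const hS (by simp [ENNReal.ofReal_eq_zero]; linarith)
    ENNReal.ofReal_ne_top, ENNReal.toReal_ofReal hp0.le] at h1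
  -- measure bound
  have hd := hz t₁ ht₁ t₂ ht₂
  have habs : (0:ℝ) ≤ |t₁ - t₂| ^ ((1:ℝ)/2) := Real.rpow_nonneg (abs_nonneg _) _
  have hvol : (volume.restrict Ω) S
      ≤ ENNReal.ofReal (4 * rc * M * |t₁ - t₂| ^ ((1:ℝ)/2)) := by
    refine le_trans (Measure.restrict_apply_le _ _) ?_
    refine le_trans (measure_union_le _ _) ?_
    have l1 := lune_ball (z t₁) (z t₂) rc hrc
    have l2 := lune_ball (z t₂) (z t₁) rc hrc
    rw [dist_comm] at l2
    calc volume (A \ B) + volume (B \ A)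
        ≤ ENNReal.ofReal (2 * rc * dist (z t₁) (z t₂))
          + ENNReal.ofReal (2 * rc * dist (z t₁) (z t₂)) := add_le_add l1 l2
      _ = ENNReal.ofReal (4 * rc * dist (z t₁) (z t₂)) := by
          rw [← ENNReal.ofReal_add (by positivity) (by positivity)]; ring_nf
      _ ≤ _ := ENNReal.ofReal_le_ofReal (by nlinarith [dist_nonneg (x := z t₁) (y := z t₂)])
  have hmono : ((volume.restrict Ω) S) ^ (1/p)
      ≤ (ENNReal.ofReal (4 * rc * M * |t₁ - t₂| ^ ((1:ℝ)/2))) ^ (1/p) :=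
    ENNReal.rpow_le_rpow hvol (by positivity)
  have hreal : (4 * rc * M * |t₁ - t₂| ^ ((1:ℝ)/2)) ^ (1/p)
      = (4 * rc * M) ^ (1/p) * |t₁ - t₂| ^ (1 / (2 * p)) := by
    rw [Real.mul_rpow (by positivity) habs, ← Real.rpow_mul (abs_nonneg _)]
    congr 1
    ring
  calc eLpNorm (fun x => g t₁ x - g t₂ x) (ENNReal.ofReal p) (volume.restrict Ω)
      ≤ (‖F₀‖₊ : ENNReal) * ((volume.restrict Ω) S) ^ (1/p) := h1
    _ ≤ (‖F₀‖₊ : ENNReal) * (ENNReal.ofReal (4 * rc * M * |t₁ - t₂| ^ ((1:ℝ)/2))) ^ (1/p) := by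
        exact mul_le_mul_right hmono _
    _ = ENNReal.ofReal (F₀ * ((4 * rc * M) ^ (1/p) * |t₁ - t₂| ^ (1 / (2 * p)))) := by
        rw [← enorm_eq_nnnorm, Real.enorm_eq_ofReal hF₀.le,
          ENNReal.ofReal_rpow_of_nonneg (by positivity) (by positivity), hreal,
          ← ENNReal.ofReal_mul hF₀.le]
    _ = ENNReal.ofReal (F₀ * (4 * rc * M) ^ (1/p) * |t₁ - t₂| ^ (1 / (2 * p))) := by
        ring_nf
end
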